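/- Let E and F be real inner product spaces, let T > 0 and λ, μ > 0 be real numbers, and let w : ℝ → E and g : ℝ → F be continuously differentiable on [0, T] with w(0) = 0 and g(0) = 0. Then the quantity a := ∫₀ᵀ ( λ⟨w′(t), w(t)⟩_E + μ‖w′(t)‖²_E + λ‖g(t)‖²_F + μ⟨g(t), g′(t)⟩_F ) dt satisfies the identity a = λ∫₀ᵀ‖g(t)‖² dt + μ∫₀ᵀ‖w′(t)‖² dt + (λ/2)‖w(T)‖² + (μ/2)‖g(T)‖², and consequently a ≥ (1/2) ( λ∫₀ᵀ‖g(t)‖² dt + μ∫₀ᵀ‖w′(t)‖² dt + λ‖w(T)‖² + μ‖g(T)‖² ). -/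

import Mathlib

open intervalIntegral

lemma aux_ftc {E : Type*} [NormedAddCommGroup E] [InnerProductSpace ℝ E]
    (T : ℝ) (hT : 0 < T) (h h' : ℝ → E)
    (hd : ∀ t ∈ Set.Icc (0:ℝ) T, HasDerivAt h (h' t) t)
    (hc : ContinuousOn h' (Set.Icc (0:ℝ) T)) :
    ∫ t in (0:ℝ)..T, (inner ℝ (h' t) (h t) : ℝ)
      = ‖h T‖ ^ 2 / 2 - ‖h 0‖ ^ 2 / 2 := by
  have huIcc : Set.uIcc (0:ℝ) T = Set.Icc 0 T := Set.uIcc_of_le hT.le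
  have hcont : ContinuousOn h (Set.Icc (0:ℝ) T) := fun t ht =>
    (hd t ht).continuousAt.continuousWithinAt
  have hderiv : ∀ t ∈ Set.uIcc (0:ℝ) T,
      HasDerivAt (fun s => ‖h s‖ ^ 2 / 2) ((inner ℝ (h' t) (h t) : ℝ)) t := by
    intro t ht
    rw [huIcc] at ht
    have h1 : HasDerivAt (fun s => (inner ℝ (h s) (h s) : ℝ))
        ((inner ℝ (h t) (h' t) : ℝ) + (inner ℝ (h' t) (h t) : ℝ)) t :=
      (hd t ht).inner ℝ (hd t ht)
    have h2 : HasDerivAt (fun s => (inner ℝ (h s) (h s) : ℝ) / 2)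
        (((inner ℝ (h t) (h' t) : ℝ) + (inner ℝ (h' t) (h t) : ℝ)) / 2) t :=
      h1.div_const 2
    have heq : (fun s => (inner ℝ (h s) (h s) : ℝ) / 2)
        = fun s => ‖h s‖ ^ 2 / 2 := by
      funext s; rw [real_inner_self_eq_norm_sq]
    rw [heq] at h2
    convert h2 using 1
    rw [real_inner_comm (h t) (h' t)]; ring
  have hint : IntervalIntegrable (fun t => (inner ℝ (h' t) (h t) : ℝ))
      MeasureTheory.volume 0 T := by
    apply ContinuousOn.intervalIntegrable
    rw [huIcc]
    exact hc.inner hcont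
  have := intervalIntegral.integral_eq_sub_of_hasDerivAt hderiv hint
  simpa using this

theorem stmt_0 {E F : Type*} [NormedAddCommGroup E] [InnerProductSpace ℝ E]
    [NormedAddCommGroup F] [InnerProductSpace ℝ F]
    (T lam mu : ℝ) (hT : 0 < T) (hlam : 0 < lam) (hmu : 0 < mu)
    (w w' : ℝ → E) (g g' : ℝ → F)
    (hw : ∀ t ∈ Set.Icc (0:ℝ) T, HasDerivAt w (w' t) t)
    (hg : ∀ t ∈ Set.Icc (0:ℝ) T, HasDerivAt g (g' t) t)
    (hwc : ContinuousOn w' (Set.Icc (0:ℝ) T))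
    (hgc : ContinuousOn g' (Set.Icc (0:ℝ) T))
    (hw0 : w 0 = 0) (hg0 : g 0 = 0) :
    (∫ t in (0:ℝ)..T,
        (lam * (inner ℝ (w' t) (w t) : ℝ) + mu * ‖w' t‖ ^ 2
          + lam * ‖g t‖ ^ 2 + mu * (inner ℝ (g t) (g' t) : ℝ)))
      = lam * (∫ t in (0:ℝ)..T, ‖g t‖ ^ 2)
        + mu * (∫ t in (0:ℝ)..T, ‖w' t‖ ^ 2)
        + (lam / 2) * ‖w T‖ ^ 2 + (mu / 2) * ‖g T‖ ^ 2
    ∧ (1 / 2) * (lam * (∫ t in (0:ℝ)..T, ‖g t‖ ^ 2)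
        + mu * (∫ t in (0:ℝ)..T, ‖w' t‖ ^ 2)
        + lam * ‖w T‖ ^ 2 + mu * ‖g T‖ ^ 2)
      ≤ ∫ t in (0:ℝ)..T,
          (lam * (inner ℝ (w' t) (w t) : ℝ) + mu * ‖w' t‖ ^ 2
            + lam * ‖g t‖ ^ 2 + mu * (inner ℝ (g t) (g' t) : ℝ)) := by
  have huIcc : Set.uIcc (0:ℝ) T = Set.Icc 0 T := Set.uIcc_of_le hT.le
  have hwcont : ContinuousOn w (Set.Icc (0:ℝ) T) := fun t ht =>
    (hw t ht).continuousAt.continuousWithinAt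
  have hgcont : ContinuousOn g (Set.Icc (0:ℝ) T) := fun t ht =>
    (hg t ht).continuousAt.continuousWithinAt
  -- FTC for w
  have hwftc : ∫ t in (0:ℝ)..T, (inner ℝ (w' t) (w t) : ℝ) = ‖w T‖ ^ 2 / 2 := by
    have := aux_ftc T hT w w' hw hwc
    rw [hw0] at this; simpa using this
  -- FTC for g (inner ℝ (g t) (g' t) = inner (g' t) (g t) by symmetry)
  have hgftc : ∫ t in (0:ℝ)..T, (inner ℝ (g t) (g' t) : ℝ) = ‖g T‖ ^ 2 / 2 := by
    have := aux_ftc T hT g g' hg hgc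
    rw [hg0] at this
    simp only [norm_zero] at this
    have heq : (fun t => (inner ℝ (g t) (g' t) : ℝ))
        = fun t => (inner ℝ (g' t) (g t) : ℝ) := by
      funext t; exact real_inner_comm _ _
    rw [show (∫ t in (0:ℝ)..T, (inner ℝ (g t) (g' t) : ℝ))
        = ∫ t in (0:ℝ)..T, (inner ℝ (g' t) (g t) : ℝ) from by rw [heq]]
    simpa using this
  -- integrabilities
  have i1 : IntervalIntegrable (fun t => (inner ℝ (w' t) (w t) : ℝ))
      MeasureTheory.volume 0 T := by
    apply ContinuousOn.intervalIntegrable; rw [huIcc]; exact hwc.inner hwcont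
  have i2 : IntervalIntegrable (fun t => ‖w' t‖ ^ 2)
      MeasureTheory.volume 0 T := by
    apply ContinuousOn.intervalIntegrable; rw [huIcc]
    exact (hwc.norm).pow 2
  have i3 : IntervalIntegrable (fun t => ‖g t‖ ^ 2)
      MeasureTheory.volume 0 T := by
    apply ContinuousOn.intervalIntegrable; rw [huIcc]
    exact (hgcont.norm).pow 2
  have i4 : IntervalIntegrable (fun t => (inner ℝ (g t) (g' t) : ℝ))
      MeasureTheory.volume 0 T := by
    apply ContinuousOn.intervalIntegrable; rw [huIcc]; exact hgcont.inner hgc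
  have hsplit : (∫ t in (0:ℝ)..T,
        (lam * (inner ℝ (w' t) (w t) : ℝ) + mu * ‖w' t‖ ^ 2
          + lam * ‖g t‖ ^ 2 + mu * (inner ℝ (g t) (g' t) : ℝ)))
      = lam * (∫ t in (0:ℝ)..T, (inner ℝ (w' t) (w t) : ℝ))
        + mu * (∫ t in (0:ℝ)..T, ‖w' t‖ ^ 2)
        + lam * (∫ t in (0:ℝ)..T, ‖g t‖ ^ 2)
        + mu * (∫ t in (0:ℝ)..T, (inner ℝ (g t) (g' t) : ℝ)) := by
    rw [intervalIntegral.integral_add (((i1.const_mul lam).add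
        (i2.const_mul mu)).add (i3.const_mul lam)) (i4.const_mul mu),
      intervalIntegral.integral_add ((i1.const_mul lam).add
        (i2.const_mul mu)) (i3.const_mul lam),
      intervalIntegral.integral_add (i1.const_mul lam) (i2.const_mul mu),
      intervalIntegral.integral_const_mul, intervalIntegral.integral_const_mul,
      intervalIntegral.integral_const_mul, intervalIntegral.integral_const_mul]
  have key : (∫ t in (0:ℝ)..T,
        (lam * (inner ℝ (w' t) (w t) : ℝ) + mu * ‖w' t‖ ^ 2
          + lam * ‖g t‖ ^ 2 + mu * (inner ℝ (g t) (g' t) : ℝ)))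
      = lam * (∫ t in (0:ℝ)..T, ‖g t‖ ^ 2)
        + mu * (∫ t in (0:ℝ)..T, ‖w' t‖ ^ 2)
        + (lam / 2) * ‖w T‖ ^ 2 + (mu / 2) * ‖g T‖ ^ 2 := by
    rw [hsplit, hwftc, hgftc]; ring
  refine ⟨key, ?_⟩
  rw [key]
  have hgint : 0 ≤ ∫ t in (0:ℝ)..T, ‖g t‖ ^ 2 :=
    intervalIntegral.integral_nonneg hT.le (fun t _ => by positivity)
  have hwint : 0 ≤ ∫ t in (0:ℝ)..T, ‖w' t‖ ^ 2 :=
    intervalIntegral.integral_nonneg hT.le (fun t _ => by positivity)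
  nlinarith [sq_nonneg ‖w T‖, sq_nonneg ‖g T‖]
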